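/- A function J : (0,1) → ℝ whose derivative satisfies the Chernoff–Savage growth bound |J′(u)| ≤ c(u(1-u))^{-1-δ} with 0 < δ < 1/4 on (0, α₀) ∪ (1-α₀, 1), and which is continuous on [α₀, 1-α₀], is square integrable on (0,1). -/

import Mathlib

open MeasureTheory

section Aux

/-- On `(0,a)` with `a < 1/2`, the Chernoff–Savage bound simplifies to `4c u^{-δ-1}`. -/
private lemma cs_deriv_bound {c δ : ℝ} (hc : 0 < c) (hδ₁ : 0 < δ) (hδ₂ : δ < 1/4)
    {u : ℝ} (hu : 0 < u) (hu2 : u < 1/2) :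
    c * (u * (1 - u)) ^ (-(1 + δ)) ≤ 4 * c * u ^ (-δ - 1) := by
  have h1u : (0:ℝ) < 1 - u := by linarith
  have hsplit : (u * (1 - u)) ^ (-(1 + δ)) = u ^ (-(1 + δ)) * (1 - u) ^ (-(1 + δ)) :=
    Real.mul_rpow hu.le h1u.le
  have h24 : (1 - u) ^ (-(1 + δ)) ≤ 4 := by
    have hle : (1 - u : ℝ) ^ (-(1 + δ)) ≤ (1/2 : ℝ) ^ (-(1 + δ)) :=
      Real.rpow_le_rpow_of_nonpos (by norm_num) (by linarith) (by linarith)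
    have heq : (1/2 : ℝ) ^ (-(1 + δ)) = (2:ℝ) ^ (1 + δ) := by
      rw [show (1/2:ℝ) = 2⁻¹ by norm_num, Real.inv_rpow (by norm_num), ← Real.rpow_neg (by norm_num),
        neg_neg]
    have h2 : (2:ℝ) ^ (1 + δ) ≤ (2:ℝ) ^ (2:ℝ) :=
      Real.rpow_le_rpow_of_exponent_le one_le_two (by linarith)
    have h4 : (2:ℝ) ^ (2:ℝ) = 4 := by
      rw [show (2:ℝ) = ((2:ℕ):ℝ) from by norm_num, Real.rpow_natCast]; norm_num
    linarith [hle, heq ▸ hle, h4 ▸ h2]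
  have hpos : (0:ℝ) < u ^ (-(1 + δ)) := Real.rpow_pos_of_pos hu _
  calc c * (u * (1 - u)) ^ (-(1 + δ)) = c * u ^ (-(1 + δ)) * (1 - u) ^ (-(1 + δ)) := by
        rw [hsplit]; ring
    _ ≤ c * u ^ (-(1 + δ)) * 4 := by
        apply mul_le_mul_of_nonneg_left h24 (by positivity)
    _ = 4 * c * u ^ (-δ - 1) := by rw [show -(1+δ) = -δ - 1 by ring]; ring

/-- Square integrability near `0` under the Chernoff–Savage growth condition. -/
private lemma cs_integrable_left (J J' : ℝ → ℝ) (c δ a : ℝ)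
    (hc : 0 < c) (hδ₁ : 0 < δ) (hδ₂ : δ < 1/4) (ha0 : 0 < a) (ha1 : a < 1/2)
    (hd : ∀ u ∈ Set.Ioo (0:ℝ) a, HasDerivAt J (J' u) u)
    (hb : ∀ u ∈ Set.Ioo (0:ℝ) a, |J' u| ≤ c * (u * (1 - u)) ^ (-(1 + δ))) :
    IntegrableOn (fun u => (J u) ^ 2) (Set.Ioo 0 a) := by
  set K : ℝ := 4 * c / δ with hK
  have hKpos : 0 < K := by positivity
  set b : ℝ := a / 2 with hbdef
  have hbmem : b ∈ Set.Ioo (0:ℝ) a := ⟨by positivity, by linarith⟩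
  set M : ℝ := |J b| with hM
  have hMnn : 0 ≤ M := abs_nonneg _
  -- derivative of the comparison function
  have hrpow : ∀ u ∈ Set.Ioo (0:ℝ) a,
      HasDerivAt (fun x : ℝ => K * x ^ (-δ)) (-(4*c) * u ^ (-δ - 1)) u := by
    intro u hu
    have h := (Real.hasDerivAt_rpow_const (x := u) (p := -δ) (Or.inl hu.1.ne')).const_mul K
    have hKδ : K * δ = 4 * c := by rw [hK]; field_simp
    rw [show -(4*c) * u ^ (-δ - 1) = K * (-δ * u ^ (-δ - 1)) by rw [← hKδ]; ring]
    exact h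
  -- F := J + K u^{-δ} is antitone; G := J - K u^{-δ} is monotone.
  have hcontJ : ContinuousOn J (Set.Ioo 0 a) := fun u hu =>
    (hd u hu).continuousAt.continuousWithinAt
  have hcontP : ContinuousOn (fun x : ℝ => K * x ^ (-δ)) (Set.Ioo 0 a) := fun u hu =>
    (hrpow u hu).continuousAt.continuousWithinAt
  have hder_le : ∀ u ∈ Set.Ioo (0:ℝ) a, |J' u| ≤ 4 * c * u ^ (-δ - 1) := by
    intro u hu
    exact (hb u hu).trans (cs_deriv_bound hc hδ₁ hδ₂ hu.1 (by linarith [hu.2]))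
  have hFanti : AntitoneOn (fun u => J u + K * u ^ (-δ)) (Set.Ioo 0 a) := by
    apply antitoneOn_of_deriv_nonpos (convex_Ioo 0 a) (hcontJ.add hcontP)
    · intro x hx
      rw [interior_Ioo] at hx
      exact ((hd x hx).add (hrpow x hx)).differentiableAt.differentiableWithinAt
    · intro x hx
      rw [interior_Ioo] at hx
      rw [((hd x hx).add (hrpow x hx)).deriv]
      have := hder_le x hx
      have := abs_le.mp this
      linarith [this.2]
  have hGmono : MonotoneOn (fun u => J u - K * u ^ (-δ)) (Set.Ioo 0 a) := by
    apply monotoneOn_of_deriv_nonneg (convex_Ioo 0 a) (hcontJ.sub hcontP)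
    · intro x hx
      rw [interior_Ioo] at hx
      exact ((hd x hx).sub (hrpow x hx)).differentiableAt.differentiableWithinAt
    · intro x hx
      rw [interior_Ioo] at hx
      rw [((hd x hx).sub (hrpow x hx)).deriv]
      have := abs_le.mp (hder_le x hx)
      linarith [this.1]
  -- pointwise bound
  set C : ℝ := M + K * b ^ (-δ) with hC
  have hbp : 0 < K * b ^ (-δ) := mul_pos hKpos (Real.rpow_pos_of_pos hbmem.1 _)
  have hkey : ∀ u ∈ Set.Ioo (0:ℝ) a, |J u| ≤ C + K * u ^ (-δ) := by
    intro u hu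
    have hup : 0 < K * u ^ (-δ) := mul_pos hKpos (Real.rpow_pos_of_pos hu.1 _)
    have hJb1 : -M ≤ J b := neg_abs_le _
    have hJb2 : J b ≤ M := le_abs_self _
    rcases le_total u b with h | h
    · have h1 := hFanti hu hbmem h
      have h2 := hGmono hu hbmem h
      simp only at h1 h2
      rw [abs_le]; constructor <;> [skip; skip] <;> dsimp only [C] <;> nlinarith
    · have h1 := hFanti hbmem hu h
      have h2 := hGmono hbmem hu h
      simp only at h1 h2
      rw [abs_le]; constructor <;> [skip; skip] <;> dsimp only [C] <;> nlinarith
  -- dominating function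
  have hCnn : 0 ≤ C := by rw [hC]; exact add_nonneg hMnn hbp.le
  have hintg : IntegrableOn (fun u : ℝ => 2 * C ^ 2 + 2 * K ^ 2 * u ^ (-(δ * 2)))
      (Set.Ioo 0 a) := by
    apply Integrable.add
    · exact ((integrableOn_const_iff (hC := by finiteness)).mpr (Or.inr measure_Ioo_lt_top))
    · apply Integrable.const_mul
      have h2δ : (-1:ℝ) < -(δ * 2) := by linarith
      have := intervalIntegral.intervalIntegrable_rpow' (a := 0) (b := a) h2δ
      have h' : IntegrableOn (fun x : ℝ => x ^ (-(δ*2))) (Set.Ioc 0 a) := by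
        simpa [intervalIntegrable_iff, Set.uIoc_of_le ha0.le] using this
      exact h'.mono_set Set.Ioo_subset_Ioc_self
  apply Integrable.mono' hintg
  · exact ((hcontJ.pow 2).aestronglyMeasurable measurableSet_Ioo)
  · filter_upwards [ae_restrict_mem measurableSet_Ioo] with u hu
    have h1 := hkey u hu
    have h2 : (u ^ (-δ)) ^ 2 = u ^ (-(δ * 2)) := by
      rw [← Real.rpow_natCast (u ^ (-δ)) 2, ← Real.rpow_mul hu.1.le]
      norm_num
    have h3 : ‖(J u) ^ 2‖ = |J u| ^ 2 := by
      rw [Real.norm_eq_abs, abs_pow, sq_abs]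
    rw [h3]
    have h4 : |J u| ^ 2 ≤ (C + K * u ^ (-δ)) ^ 2 := by
      apply pow_le_pow_left₀ (abs_nonneg _) h1
    have h5 : (C + K * u ^ (-δ)) ^ 2 ≤ 2 * C ^ 2 + 2 * (K * u ^ (-δ)) ^ 2 := by nlinarith [sq_nonneg (C - K * u ^ (-δ))]
    have h6 : (K * u ^ (-δ)) ^ 2 = K ^ 2 * u ^ (-(δ * 2)) := by
      rw [mul_pow, h2]
    nlinarith [h4, h5, h6]

end Aux

/-- Chernoff–Savage condition implies square integrability: if `J` is differentiable
on `(0,α₀) ∪ (1-α₀,1)` with `|J'(u)| ≤ c (u(1-u))^{-1-δ}` there for `0 < δ < 1/4`, and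
continuous on `[α₀, 1-α₀]`, then `∫₀¹ J(u)² du < ∞`. -/
theorem chernoffSavage_square_integrable (J J' : ℝ → ℝ) (c δ α₀ : ℝ)
    (hc : 0 < c) (hδ₁ : 0 < δ) (hδ₂ : δ < 1/4) (hα : α₀ ∈ Set.Ioo (0:ℝ) (1/2))
    (hderiv : ∀ u ∈ Set.Ioo (0:ℝ) α₀ ∪ Set.Ioo (1 - α₀) 1, HasDerivAt J (J' u) u)
    (hbound : ∀ u ∈ Set.Ioo (0:ℝ) α₀ ∪ Set.Ioo (1 - α₀) 1,
      |J' u| ≤ c * (u * (1 - u)) ^ (-(1 + δ)))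
    (hcont : ContinuousOn J (Set.Icc α₀ (1 - α₀))) :
    IntegrableOn (fun u => (J u) ^ 2) (Set.Ioo 0 1) := by
  obtain ⟨hα0, hα1⟩ := hα
  -- left piece
  have hleft : IntegrableOn (fun u => (J u) ^ 2) (Set.Ioo 0 α₀) :=
    cs_integrable_left J J' c δ α₀ hc hδ₁ hδ₂ hα0 hα1
      (fun u hu => hderiv u (Or.inl hu)) (fun u hu => hbound u (Or.inl hu))
  -- right piece, via reflection
  have hmemr : ∀ u ∈ Set.Ioo (0:ℝ) α₀, (1 - u) ∈ Set.Ioo (1 - α₀) 1 := by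
    intro u hu
    exact ⟨by linarith [hu.2], by linarith [hu.1]⟩
  have hright' : IntegrableOn (fun u => (J (1 - u)) ^ 2) (Set.Ioo 0 α₀) := by
    apply cs_integrable_left (fun u => J (1 - u)) (fun u => -(J' (1 - u))) c δ α₀
      hc hδ₁ hδ₂ hα0 hα1
    · intro u hu
      have h1 : HasDerivAt (fun x : ℝ => 1 - x) (-1) u := (hasDerivAt_id u).const_sub 1
      have h2 := (hderiv (1 - u) (Or.inr (hmemr u hu))).comp u h1
      simpa [mul_comm, Function.comp_def] using h2
    · intro u hu
      have h2 := hbound (1 - u) (Or.inr (hmemr u hu))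
      have : (1 - (1 - u)) = u := by ring
      rw [this, mul_comm (1 - u) u] at h2
      simpa using h2
  have hpre : (fun t : ℝ => 1 - t) ⁻¹' Set.Ioo (1 - α₀) 1 = Set.Ioo 0 α₀ := by
    ext x
    simp only [Set.mem_preimage, Set.mem_Ioo]
    constructor <;> (intro h; constructor <;> linarith [h.1, h.2])
  have hright : IntegrableOn (fun u => (J u) ^ 2) (Set.Ioo (1 - α₀) 1) := by
    rw [← (Measure.measurePreserving_sub_left volume 1).integrableOn_comp_preimage
      (MeasurableEquiv.subLeft (1:ℝ)).measurableEmbedding, hpre]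
    exact hright'
  -- middle piece
  have hmid : IntegrableOn (fun u => (J u) ^ 2) (Set.Icc α₀ (1 - α₀)) :=
    (hcont.pow 2).integrableOn_compact isCompact_Icc
  -- combine
  have hsub : Set.Ioo (0:ℝ) 1 ⊆ Set.Ioo 0 α₀ ∪ (Set.Icc α₀ (1 - α₀) ∪ Set.Ioo (1 - α₀) 1) := by
    intro x hx
    rcases lt_or_ge x α₀ with h | h
    · exact Or.inl ⟨hx.1, h⟩
    · rcases le_or_gt x (1 - α₀) with h' | h'
      · exact Or.inr (Or.inl ⟨h, h'⟩)
      · exact Or.inr (Or.inr ⟨h', hx.2⟩)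
  exact (hleft.union (hmid.union hright)).mono_set hsub
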